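/- arXiv:1306.0473 — 5 statements merged into one kernel-verified Lean document; each statement's English description precedes it below -/
import Mathlib

section
/- Let m be a positive integer, let ⋆ be bitwise addition modulo 2 (XOR) on [2^m], let A be a 2^m × 2^m array in which each symbol of [2^{2m}] occurs in exactly one cell (write r*c for the entry of A in cell (r,c)), and let B be a latin square of order 2^m on [2^m] with quasigroup operation ∘. Then the array 𝓐 = {((p,r),(q,c), (q⋆r)*(p⋆c)) : p,q,r,c ∈ [2^m]}, with rows and columns indexed by [2^m]×[2^m] and symbols from [2^{2m}], is a latin square of order 2^{2m}; that is, each symbol of [2^{2m}] occurs exactly once in each row and exactly once in each column of 𝓐. -/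
/-- `A` is a `2^m × 2^m` array in which each symbol of `[2^(2m)]` occurs in exactly one
cell: all entries lie in `[2^(2m)]` and every symbol of `[2^(2m)]` occurs in a unique cell. -/
def IsCellSymbolArray (m : ℕ) (A : ℕ → ℕ → ℕ) : Prop :=
  (∀ r c, r < 2 ^ m → c < 2 ^ m → A r c < 2 ^ (2 * m)) ∧
  (∀ e, e < 2 ^ (2 * m) →
    ∃! rc : ℕ × ℕ, rc.1 < 2 ^ m ∧ rc.2 < 2 ^ m ∧ A rc.1 rc.2 = e)

/-- `B` is (the quasigroup operation of) a latin square of order `N` on `[N]`. -/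
def IsLatinOp (N : ℕ) (B : ℕ → ℕ → ℕ) : Prop :=
  (∀ r c, r < N → c < N → B r c < N) ∧
  (∀ r c₁ c₂, r < N → c₁ < N → c₂ < N → B r c₁ = B r c₂ → c₁ = c₂) ∧
  (∀ r₁ r₂ c, r₁ < N → r₂ < N → c < N → B r₁ c = B r₂ c → r₁ = r₂)

/-- The array `𝓐`, with rows `(p,r)` and columns `(q,c)` indexed by `[2^m] × [2^m]`
and entry `(q ⋆ r) * (p ⋆ c)` (where `⋆` is XOR and `*` is lookup in `A`), is a latin
square of order `2^(2m)`: each symbol of `[2^(2m)]` occurs exactly once in each row and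
exactly once in each column. -/
theorem calA_is_latin (m : ℕ) (hm : 0 < m) (A B : ℕ → ℕ → ℕ)
    (hA : IsCellSymbolArray m A) (hB : IsLatinOp (2 ^ m) B) :
    (∀ p r, p < 2 ^ m → r < 2 ^ m → ∀ e, e < 2 ^ (2 * m) →
      ∃! qc : ℕ × ℕ, qc.1 < 2 ^ m ∧ qc.2 < 2 ^ m ∧
        A (qc.1 ^^^ r) (p ^^^ qc.2) = e) ∧
    (∀ q c, q < 2 ^ m → c < 2 ^ m → ∀ e, e < 2 ^ (2 * m) →
      ∃! pr : ℕ × ℕ, pr.1 < 2 ^ m ∧ pr.2 < 2 ^ m ∧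
        A (q ^^^ pr.2) (pr.1 ^^^ c) = e) := by
  obtain ⟨hAb, hAu⟩ := hA
  constructor
  · intro p r hp hr e he
    obtain ⟨⟨a, b⟩, ⟨ha, hb, hab⟩, huniq⟩ := hAu e he
    refine ⟨(a ^^^ r, p ^^^ b), ⟨Nat.xor_lt_two_pow ha hr, Nat.xor_lt_two_pow hp hb, ?_⟩, ?_⟩
    · simpa [Nat.xor_assoc, Nat.xor_xor_cancel_right, ← Nat.xor_assoc] using hab
    · rintro ⟨q, c⟩ ⟨hq, hc, hqc⟩
      have h := huniq (q ^^^ r, p ^^^ c) ⟨Nat.xor_lt_two_pow hq hr, Nat.xor_lt_two_pow hp hc, hqc⟩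
      have h1 : q ^^^ r = a := congrArg Prod.fst h
      have h2 : p ^^^ c = b := congrArg Prod.snd h
      have hq' : q = a ^^^ r := by rw [← h1, Nat.xor_xor_cancel_right]
      have hc' : c = p ^^^ b := by rw [← h2, ← Nat.xor_assoc, Nat.xor_self, Nat.zero_xor]
      exact Prod.ext hq' hc'
  · intro q c hq hc e he
    obtain ⟨⟨a, b⟩, ⟨ha, hb, hab⟩, huniq⟩ := hAu e he
    refine ⟨(b ^^^ c, q ^^^ a), ⟨Nat.xor_lt_two_pow hb hc, Nat.xor_lt_two_pow hq ha, ?_⟩, ?_⟩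
    · simpa [Nat.xor_assoc, Nat.xor_xor_cancel_right, ← Nat.xor_assoc, Nat.xor_self, Nat.zero_xor] using hab
    · rintro ⟨p, r⟩ ⟨hp, hr, hpr⟩
      have h := huniq (q ^^^ r, p ^^^ c) ⟨Nat.xor_lt_two_pow hq hr, Nat.xor_lt_two_pow hp hc, hpr⟩
      have h1 : q ^^^ r = a := congrArg Prod.fst h
      have h2 : p ^^^ c = b := congrArg Prod.snd h
      have hp' : p = b ^^^ c := by rw [← h2, Nat.xor_xor_cancel_right]
      have hr' : r = q ^^^ a := by rw [← h1, ← Nat.xor_assoc, Nat.xor_self, Nat.zero_xor]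
      exact Prod.ext hp' hr'
end

section
/- Let m be a positive integer, let ⋆ be bitwise addition modulo 2 (XOR) on [2^m], and let B be a latin square of order 2^m on [2^m] with quasigroup operation ∘. Then the array 𝓑 = {((p,r),(q,c), (p⋆q, p⋆((q⋆r)∘(p⋆c)))) : p,q,r,c ∈ [2^m]}, with rows and columns indexed by [2^m]×[2^m] and symbols from [2^m]×[2^m], is a latin square of order 2^{2m}; that is, each symbol of [2^m]×[2^m] occurs exactly once in each row and exactly once in each column of 𝓑. -/
lemma xor_lt_pow {m a b : ℕ} (ha : a < 2 ^ m) (hb : b < 2 ^ m) : a ^^^ b < 2 ^ m := by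
  exact Nat.xor_lt_two_pow ha hb

lemma surj_col {N : ℕ} {B : ℕ → ℕ → ℕ} (hB : IsLatinOp N B) {r s : ℕ}
    (hr : r < N) (hs : s < N) : ∃ c, c < N ∧ B r c = s := by
  obtain ⟨h1, h2, _⟩ := hB
  have hinj : Set.InjOn (B r) (Finset.range N) := fun a ha b hb hab =>
    h2 r a b hr (Finset.mem_range.mp ha) (Finset.mem_range.mp hb) hab
  have himg : Finset.image (B r) (Finset.range N) = Finset.range N := by
    apply Finset.eq_of_subset_of_card_le
    · intro x hx
      obtain ⟨a, ha, rfl⟩ := Finset.mem_image.mp hx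
      exact Finset.mem_range.mpr (h1 r a hr (Finset.mem_range.mp ha))
    · rw [Finset.card_image_of_injOn hinj]
  have : s ∈ Finset.image (B r) (Finset.range N) := by
    rw [himg]; exact Finset.mem_range.mpr hs
  obtain ⟨c, hc, hcs⟩ := Finset.mem_image.mp this
  exact ⟨c, Finset.mem_range.mp hc, hcs⟩

lemma surj_row {N : ℕ} {B : ℕ → ℕ → ℕ} (hB : IsLatinOp N B) {c s : ℕ}
    (hc : c < N) (hs : s < N) : ∃ r, r < N ∧ B r c = s := by
  obtain ⟨h1, _, h3⟩ := hB
  have hinj : Set.InjOn (fun r => B r c) (Finset.range N) := fun a ha b hb hab =>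
    h3 a b c (Finset.mem_range.mp ha) (Finset.mem_range.mp hb) hc hab
  have himg : Finset.image (fun r => B r c) (Finset.range N) = Finset.range N := by
    apply Finset.eq_of_subset_of_card_le
    · intro x hx
      obtain ⟨a, ha, rfl⟩ := Finset.mem_image.mp hx
      exact Finset.mem_range.mpr (h1 a c (Finset.mem_range.mp ha) hc)
    · rw [Finset.card_image_of_injOn hinj]
  have : s ∈ Finset.image (fun r => B r c) (Finset.range N) := by
    rw [himg]; exact Finset.mem_range.mpr hs
  obtain ⟨r, hrm, hrs⟩ := Finset.mem_image.mp this
  exact ⟨r, Finset.mem_range.mp hrm, hrs⟩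

/-- The array `𝓑`, with rows `(p,r)` and columns `(q,c)` indexed by `[2^m] × [2^m]`
and entry `(p ⋆ q, p ⋆ ((q ⋆ r) ∘ (p ⋆ c)))` (where `⋆` is XOR and `∘` is lookup in `B`),
is a latin square of order `2^(2m)`: each symbol `(z,d)` of `[2^m] × [2^m]` occurs exactly
once in each row and exactly once in each column. -/
theorem calB_is_latin (m : ℕ) (hm : 0 < m) (B : ℕ → ℕ → ℕ)
    (hB : IsLatinOp (2 ^ m) B) :
    (∀ p r, p < 2 ^ m → r < 2 ^ m → ∀ z d, z < 2 ^ m → d < 2 ^ m →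
      ∃! qc : ℕ × ℕ, qc.1 < 2 ^ m ∧ qc.2 < 2 ^ m ∧
        (p ^^^ qc.1, p ^^^ B (qc.1 ^^^ r) (p ^^^ qc.2)) = (z, d)) ∧
    (∀ q c, q < 2 ^ m → c < 2 ^ m → ∀ z d, z < 2 ^ m → d < 2 ^ m →
      ∃! pr : ℕ × ℕ, pr.1 < 2 ^ m ∧ pr.2 < 2 ^ m ∧
        (pr.1 ^^^ q, pr.1 ^^^ B (q ^^^ pr.2) (pr.1 ^^^ c)) = (z, d)) := by
  obtain ⟨h1, h2, h3⟩ := hB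
  constructor
  · intro p r hp hr z d hz hd
    set q := p ^^^ z with hq
    have hqlt : q < 2 ^ m := xor_lt_pow hp hz
    obtain ⟨c', hc'lt, hc'⟩ := surj_col ⟨h1, h2, h3⟩ (xor_lt_pow hqlt hr) (xor_lt_pow hp hd)
    refine ⟨(q, p ^^^ c'), ⟨hqlt, xor_lt_pow hp hc'lt, ?_⟩, ?_⟩
    · simp only [Prod.mk.injEq]
      constructor
      · rw [hq, xor_cancel_left]
      · rw [xor_cancel_left, hc', xor_cancel_left]
    · rintro ⟨q₁, c₁⟩ ⟨hq₁, hc₁, heq⟩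
      simp only [Prod.mk.injEq] at heq
      obtain ⟨he1, he2⟩ := heq
      have hq₁q : q₁ = q := by rw [hq, ← he1, xor_cancel_left]
      have hBe : B (q ^^^ r) (p ^^^ c₁) = p ^^^ d := by
        rw [← hq₁q, ← he2, xor_cancel_left]
      have hcol : p ^^^ c₁ = c' :=
        h2 (q ^^^ r) (p ^^^ c₁) c' (xor_lt_pow hqlt hr) (xor_lt_pow hp hc₁) hc'lt
          (hBe.trans hc'.symm)
      have hc₁e : c₁ = p ^^^ c' := by rw [← hcol, xor_cancel_left]
      simp [hq₁q, hc₁e]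
  · intro q c hq hc z d hz hd
    set p := z ^^^ q with hp
    have hplt : p < 2 ^ m := xor_lt_pow hz hq
    have hpq : p ^^^ q = z := by rw [hp, xor_cancel_right]
    obtain ⟨r', hr'lt, hr'⟩ := surj_row ⟨h1, h2, h3⟩ (xor_lt_pow hplt hc) (xor_lt_pow hplt hd)
    refine ⟨(p, q ^^^ r'), ⟨hplt, xor_lt_pow hq hr'lt, ?_⟩, ?_⟩
    · simp only [Prod.mk.injEq]
      exact ⟨hpq, by rw [xor_cancel_left, hr', xor_cancel_left]⟩
    · rintro ⟨p₁, r₁⟩ ⟨hp₁, hr₁, heq⟩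
      simp only [Prod.mk.injEq] at heq
      obtain ⟨he1, he2⟩ := heq
      have hp₁p : p₁ = p := by rw [hp, ← he1, xor_cancel_right]
      have hBe : B (q ^^^ r₁) (p ^^^ c) = p ^^^ d := by
        rw [← hp₁p, ← he2, xor_cancel_left]
      have hrow : q ^^^ r₁ = r' :=
        h3 (q ^^^ r₁) r' (p ^^^ c) (xor_lt_pow hq hr₁) hr'lt (xor_lt_pow hplt hc)
          (hBe.trans hr'.symm)
      have hr₁e : r₁ = q ^^^ r' := by rw [← hrow, xor_cancel_left]
      simp [hp₁p, hr₁e]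
end

section
/- Let m be a positive integer, let ⋆ be bitwise addition modulo 2 (XOR) on [2^m], let A be a 2^m × 2^m array in which each symbol of [2^{2m}] occurs in exactly one cell (write r*c for its entry in cell (r,c)), let B be a latin square of order 2^m on [2^m] with quasigroup operation ∘, and let 𝓐 = {((p,r),(q,c), (q⋆r)*(p⋆c)) : p,q,r,c ∈ [2^m]}. For (z,d) ∈ [2^m]×[2^m] let T_{(z,d)} = {((p,r),(q,c),(q⋆r)*(p⋆c)) ∈ 𝓐 : p⋆q = z and p⋆((q⋆r)∘(p⋆c)) = d}. Then for every (z,d) ∈ [2^m]×[2^m] the set T_{(z,d)} is a transversal of 𝓐, and the 2^{2m} sets T_{(z,d)}, (z,d) ∈ [2^m]×[2^m], are pairwise disjoint and partition 𝓐. -/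
/-- The latin square `𝓐 = {((p,r),(q,c),(q ⋆ r) * (p ⋆ c))}` as a set of triples. -/
def calA (m : ℕ) (A : ℕ → ℕ → ℕ) : Set ((ℕ × ℕ) × (ℕ × ℕ) × ℕ) :=
  {t | ∃ p q r c, p < 2 ^ m ∧ q < 2 ^ m ∧ r < 2 ^ m ∧ c < 2 ^ m ∧
    t = ((p, r), (q, c), A (q ^^^ r) (p ^^^ c))}

/-- The set `T_{(z,d)}` of triples of `𝓐` with `p ⋆ q = z` and
`p ⋆ ((q ⋆ r) ∘ (p ⋆ c)) = d`. -/
def Tset (m : ℕ) (A B : ℕ → ℕ → ℕ) (z d : ℕ) : Set ((ℕ × ℕ) × (ℕ × ℕ) × ℕ) :=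
  {t | ∃ p q r c, p < 2 ^ m ∧ q < 2 ^ m ∧ r < 2 ^ m ∧ c < 2 ^ m ∧
    t = ((p, r), (q, c), A (q ^^^ r) (p ^^^ c)) ∧
    p ^^^ q = z ∧ p ^^^ B (q ^^^ r) (p ^^^ c) = d}

/-- A transversal of a latin square `L` of order `N` (given as a set of
(row, column, symbol) triples): a subset of `L` of `N` triples no two of which share a
row, share a column, or share a symbol. -/
def IsTransversal (N : ℕ) (L T : Set ((ℕ × ℕ) × (ℕ × ℕ) × ℕ)) : Prop :=
  T ⊆ L ∧ T.ncard = N ∧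
  ∀ t₁ ∈ T, ∀ t₂ ∈ T, t₁ ≠ t₂ →
    t₁.1 ≠ t₂.1 ∧ t₁.2.1 ≠ t₂.2.1 ∧ t₁.2.2 ≠ t₂.2.2


private lemma latin_surj {N : ℕ} {B : ℕ → ℕ → ℕ} (hB : IsLatinOp N B) :
    ∀ x s, x < N → s < N → ∃ y, y < N ∧ B y x = s := by
  intro x s hx hs
  have hinj : Function.Injective (fun y : Fin N => (⟨B y x, hB.1 y x y.2 hx⟩ : Fin N)) := by
    intro y₁ y₂ h
    exact Fin.ext (hB.2.2 y₁ y₂ x y₁.2 y₂.2 hx (by simpa using congrArg Fin.val h))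
  obtain ⟨y, hy⟩ := Finite.surjective_of_injective hinj ⟨s, hs⟩
  exact ⟨y, y.2, congrArg Fin.val hy⟩

private lemma xor_left_cancel' {a b c : ℕ} (h : a ^^^ b = a ^^^ c) : b = c := by
  have := congrArg (fun t => a ^^^ t) h
  simpa [Nat.xor_xor_cancel_left] using this

private lemma xor_right_cancel' {a b c : ℕ} (h : b ^^^ a = c ^^^ a) : b = c := by
  have := congrArg (fun t => t ^^^ a) h
  simpa [Nat.xor_xor_cancel_right] using this

/-- Each `T_{(z,d)}`, `(z,d) ∈ [2^m] × [2^m]`, is a transversal of `𝓐`, and these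
`2^(2m)` sets are pairwise disjoint and partition `𝓐`. -/
theorem Tsets_partition_into_transversals (m : ℕ) (hm : 0 < m) (A B : ℕ → ℕ → ℕ)
    (hA : IsCellSymbolArray m A) (hB : IsLatinOp (2 ^ m) B) :
    (∀ z d, z < 2 ^ m → d < 2 ^ m →
      IsTransversal (2 ^ (2 * m)) (calA m A) (Tset m A B z d)) ∧
    (∀ z₁ d₁ z₂ d₂, z₁ < 2 ^ m → d₁ < 2 ^ m → z₂ < 2 ^ m → d₂ < 2 ^ m →
      (z₁, d₁) ≠ (z₂, d₂) → Tset m A B z₁ d₁ ∩ Tset m A B z₂ d₂ = ∅) ∧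
    (⋃ z ∈ Set.Iio (2 ^ m), ⋃ d ∈ Set.Iio (2 ^ m), Tset m A B z d) = calA m A := by
  have hxlt : ∀ {a b : ℕ}, a < 2 ^ m → b < 2 ^ m → a ^^^ b < 2 ^ m :=
    fun ha hb => Nat.xor_lt_two_pow ha hb
  refine ⟨?_, ?_, ?_⟩
  · -- transversal
    intro z d hz hd
    refine ⟨?_, ?_, ?_⟩
    · rintro t ⟨p, q, r, c, hp, hq, hr, hc, ht, -, -⟩
      exact ⟨p, q, r, c, hp, hq, hr, hc, ht⟩
    · -- cardinality
      have hex : ∀ pq : ℕ × ℕ, ∃ y, pq.1 < 2 ^ m → pq.2 < 2 ^ m →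
          y < 2 ^ m ∧ B y pq.2 = pq.1 ^^^ d := by
        intro pq
        by_cases hp : pq.1 < 2 ^ m
        · by_cases hx : pq.2 < 2 ^ m
          · obtain ⟨y, hy⟩ := latin_surj hB pq.2 (pq.1 ^^^ d) hx (hxlt hp hd)
            exact ⟨y, fun _ _ => hy⟩
          · exact ⟨0, fun _ h => absurd h hx⟩
        · exact ⟨0, fun h => absurd h hp⟩
      choose Y hY using hex
      set f : ℕ × ℕ → (ℕ × ℕ) × (ℕ × ℕ) × ℕ :=
        fun pq => ((pq.1, (pq.1 ^^^ z) ^^^ Y pq), (pq.1 ^^^ z, pq.1 ^^^ pq.2),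
          A (Y pq) pq.2) with hf
      have himg : Tset m A B z d
          = f '' ↑(Finset.range (2 ^ m) ×ˢ Finset.range (2 ^ m)) := by
        ext t
        constructor
        · rintro ⟨p, q, r, c, hp, hq, hr, hc, rfl, hz1, hd1⟩
          have hq' : q = p ^^^ z := by rw [← hz1, Nat.xor_xor_cancel_left]
          have hBv : B (q ^^^ r) (p ^^^ c) = p ^^^ d := by
            rw [← hd1, Nat.xor_xor_cancel_left]
          refine ⟨(p, p ^^^ c), by
            simp [Finset.mem_product, Finset.mem_range, hp, hxlt hp hc], ?_⟩
          obtain ⟨hYlt, hYB⟩ := hY (p, p ^^^ c) hp (hxlt hp hc)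
          have hYeq : Y (p, p ^^^ c) = q ^^^ r :=
            hB.2.2 _ _ (p ^^^ c) hYlt (hxlt hq hr) (hxlt hp hc) (by rw [hYB, hBv])
          simp only [hf, hYeq, ← hq']
          rw [Nat.xor_xor_cancel_left, Nat.xor_xor_cancel_left]
        · rintro ⟨⟨p, x⟩, hmem, rfl⟩
          simp only [Finset.coe_product, Set.mem_prod, Finset.mem_coe,
            Finset.mem_range] at hmem
          obtain ⟨hp, hx⟩ := hmem
          obtain ⟨hYlt, hYB⟩ := hY (p, x) hp hx
          refine ⟨p, p ^^^ z, (p ^^^ z) ^^^ Y (p, x), p ^^^ x, hp, hxlt hp hz,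
            hxlt (hxlt hp hz) hYlt, hxlt hp hx, ?_, Nat.xor_xor_cancel_left _ _, ?_⟩
          · simp [hf, Nat.xor_xor_cancel_left]
          · rw [Nat.xor_xor_cancel_left, Nat.xor_xor_cancel_left, hYB, Nat.xor_xor_cancel_left]
      have hinj : Set.InjOn f ↑(Finset.range (2 ^ m) ×ˢ Finset.range (2 ^ m)) := by
        rintro ⟨p, x⟩ - ⟨p', x'⟩ - h
        simp only [hf, Prod.mk.injEq] at h
        obtain ⟨⟨h1, -⟩, ⟨-, h2⟩, -⟩ := h
        subst h1
        exact Prod.ext rfl (xor_left_cancel' h2)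
      rw [himg, Set.ncard_image_of_injOn hinj, Set.ncard_coe_finset,
        Finset.card_product, Finset.card_range, two_mul, pow_add]
    · -- no shared row/column/symbol
      rintro t₁ ⟨p₁, q₁, r₁, c₁, hp₁, hq₁, hr₁, hc₁, rfl, hz₁, hd₁⟩
        t₂ ⟨p₂, q₂, r₂, c₂, hp₂, hq₂, hr₂, hc₂, rfl, hz₂, hd₂⟩ hne
      have hq₁' : q₁ = p₁ ^^^ z := by rw [← hz₁, Nat.xor_xor_cancel_left]
      have hq₂' : q₂ = p₂ ^^^ z := by rw [← hz₂, Nat.xor_xor_cancel_left]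
      have hB₁ : B (q₁ ^^^ r₁) (p₁ ^^^ c₁) = p₁ ^^^ d := by
        rw [← hd₁, Nat.xor_xor_cancel_left]
      have hB₂ : B (q₂ ^^^ r₂) (p₂ ^^^ c₂) = p₂ ^^^ d := by
        rw [← hd₂, Nat.xor_xor_cancel_left]
      refine ⟨?_, ?_, ?_⟩ <;> intro h <;> apply hne
      · -- same row
        obtain ⟨hp, hr⟩ : p₁ = p₂ ∧ r₁ = r₂ := Prod.mk.injEq .. ▸ h
        subst hp; subst hr
        have hq : q₁ = q₂ := by rw [hq₁', hq₂']
        subst hq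
        have hc : c₁ = c₂ := xor_left_cancel' <|
          hB.2.1 (q₁ ^^^ r₁) (p₁ ^^^ c₁) (p₁ ^^^ c₂) (hxlt hq₁ hr₁)
            (hxlt hp₁ hc₁) (hxlt hp₁ hc₂) (by rw [hB₁, hB₂])
        subst hc; rfl
      · -- same column
        obtain ⟨hq, hc⟩ : q₁ = q₂ ∧ c₁ = c₂ := Prod.mk.injEq .. ▸ h
        subst hq; subst hc
        have hp : p₁ = p₂ := by
          have h1 : p₁ = z ^^^ q₁ := by rw [← hz₁, Nat.xor_xor_cancel_right]
          have h2 : p₂ = z ^^^ q₁ := by rw [← hz₂, Nat.xor_xor_cancel_right]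
          rw [h1, h2]
        subst hp
        have hr : r₁ = r₂ := xor_left_cancel' <|
          hB.2.2 (q₁ ^^^ r₁) (q₁ ^^^ r₂) (p₁ ^^^ c₁) (hxlt hq₁ hr₁)
            (hxlt hq₁ hr₂) (hxlt hp₁ hc₁) (by rw [hB₁, hB₂])
        subst hr; rfl
      · -- same symbol
        obtain ⟨w, -, huniq⟩ := hA.2 (A (q₁ ^^^ r₁) (p₁ ^^^ c₁))
          (hA.1 _ _ (hxlt hq₁ hr₁) (hxlt hp₁ hc₁))
        have e₁ := huniq (q₁ ^^^ r₁, p₁ ^^^ c₁) ⟨hxlt hq₁ hr₁, hxlt hp₁ hc₁, rfl⟩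
        have e₂ := huniq (q₂ ^^^ r₂, p₂ ^^^ c₂) ⟨hxlt hq₂ hr₂, hxlt hp₂ hc₂, h.symm⟩
        obtain ⟨hy, hx⟩ : q₁ ^^^ r₁ = q₂ ^^^ r₂ ∧ p₁ ^^^ c₁ = p₂ ^^^ c₂ :=
          Prod.mk.injEq .. ▸ e₁.trans e₂.symm
        have hp : p₁ = p₂ := by
          have := hB₂
          rw [← hy, ← hx, hB₁] at this
          exact xor_right_cancel' this
        subst hp
        have hq : q₁ = q₂ := by rw [hq₁', hq₂']
        subst hq
        have hr : r₁ = r₂ := xor_left_cancel' hy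
        have hc : c₁ = c₂ := xor_left_cancel' hx
        subst hr; subst hc; rfl
  · -- pairwise disjoint
    intro z₁ d₁ z₂ d₂ hz₁ hd₁ hz₂ hd₂ hne
    rw [Set.eq_empty_iff_forall_notMem]
    rintro t ⟨⟨p, q, r, c, hp, hq, hr, hc, rfl, hza, hda⟩,
      ⟨p', q', r', c', hp', hq', hr', hc', heq, hzb, hdb⟩⟩
    obtain ⟨⟨rfl, rfl⟩, ⟨rfl, rfl⟩, -⟩ :
        (p = p' ∧ r = r') ∧ (q = q' ∧ c = c') ∧ _ := by
      simpa [Prod.mk.injEq] using heq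
    exact hne (by rw [← hza, ← hzb, ← hda, ← hdb])
  · -- union
    ext t
    simp only [Set.mem_iUnion, Set.mem_Iio]
    constructor
    · rintro ⟨z, -, d, -, p, q, r, c, hp, hq, hr, hc, ht, -, -⟩
      exact ⟨p, q, r, c, hp, hq, hr, hc, ht⟩
    · rintro ⟨p, q, r, c, hp, hq, hr, hc, rfl⟩
      exact ⟨p ^^^ q, hxlt hp hq,
        p ^^^ B (q ^^^ r) (p ^^^ c),
        hxlt hp (hB.1 _ _ (hxlt hq hr) (hxlt hp hc)),
        p, q, r, c, hp, hq, hr, hc, rfl, rfl, rfl⟩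
end

section
/- Let m be a positive integer, let ⋆ be bitwise addition modulo 2 (XOR) on [2^m], let A be a 2^m × 2^m array in which each symbol of [2^{2m}] occurs in exactly one cell (write r*c for its entry in cell (r,c)), and let B be a latin square of order 2^m on [2^m] with quasigroup operation ∘. Then the latin squares 𝓐 = {((p,r),(q,c), (q⋆r)*(p⋆c)) : p,q,r,c ∈ [2^m]} and 𝓑 = {((p,r),(q,c), (p⋆q, p⋆((q⋆r)∘(p⋆c)))) : p,q,r,c ∈ [2^m]}, of order 2^{2m}, are orthogonal: whenever two distinct cells of 𝓐 carry the same symbol, the corresponding two cells of 𝓑 carry distinct symbols. -/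
lemma xor_cancel_right' {a b c : ℕ} (h : a ^^^ c = b ^^^ c) : a = b := by
  have := congrArg (· ^^^ c) h
  simpa [Nat.xor_xor_cancel_right] using this

lemma xor_cancel_left' {a b c : ℕ} (h : c ^^^ a = c ^^^ b) : a = b := by
  have := congrArg (c ^^^ ·) h
  simpa [Nat.xor_xor_cancel_left] using this

/-- The latin squares `𝓐` (with entry `(q ⋆ r) * (p ⋆ c)` in cell `((p,r),(q,c))`) and
`𝓑` (with entry `(p ⋆ q, p ⋆ ((q ⋆ r) ∘ (p ⋆ c)))` in cell `((p,r),(q,c))`) of order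
`2^(2m)` are orthogonal: whenever two distinct cells of `𝓐` carry the same symbol, the
corresponding two cells of `𝓑` carry distinct symbols. -/
theorem calA_calB_orthogonal (m : ℕ) (hm : 0 < m) (A B : ℕ → ℕ → ℕ)
    (hA : IsCellSymbolArray m A) (hB : IsLatinOp (2 ^ m) B) :
    ∀ p₁ r₁ q₁ c₁ p₂ r₂ q₂ c₂ : ℕ,
      p₁ < 2 ^ m → r₁ < 2 ^ m → q₁ < 2 ^ m → c₁ < 2 ^ m →
      p₂ < 2 ^ m → r₂ < 2 ^ m → q₂ < 2 ^ m → c₂ < 2 ^ m →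
      (((p₁, r₁), (q₁, c₁)) : (ℕ × ℕ) × (ℕ × ℕ)) ≠ ((p₂, r₂), (q₂, c₂)) →
      A (q₁ ^^^ r₁) (p₁ ^^^ c₁) = A (q₂ ^^^ r₂) (p₂ ^^^ c₂) →
      (p₁ ^^^ q₁, p₁ ^^^ B (q₁ ^^^ r₁) (p₁ ^^^ c₁)) ≠
        (p₂ ^^^ q₂, p₂ ^^^ B (q₂ ^^^ r₂) (p₂ ^^^ c₂)) := by
  intro p₁ r₁ q₁ c₁ p₂ r₂ q₂ c₂ hp₁ hr₁ hq₁ hc₁ hp₂ hr₂ hq₂ hc₂ hne hAeq hBeq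
  obtain ⟨hAb, hAu⟩ := hA
  have h1 : q₁ ^^^ r₁ < 2 ^ m := Nat.xor_lt_two_pow hq₁ hr₁
  have h2 : p₁ ^^^ c₁ < 2 ^ m := Nat.xor_lt_two_pow hp₁ hc₁
  have h3 : q₂ ^^^ r₂ < 2 ^ m := Nat.xor_lt_two_pow hq₂ hr₂
  have h4 : p₂ ^^^ c₂ < 2 ^ m := Nat.xor_lt_two_pow hp₂ hc₂
  -- injectivity of A as a cell-symbol array
  obtain ⟨rc, -, huniq⟩ := hAu (A (q₂ ^^^ r₂) (p₂ ^^^ c₂)) (hAb _ _ h3 h4)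
  have e1 := huniq (q₁ ^^^ r₁, p₁ ^^^ c₁) ⟨h1, h2, hAeq⟩
  have e2 := huniq (q₂ ^^^ r₂, p₂ ^^^ c₂) ⟨h3, h4, rfl⟩
  have hrr : q₁ ^^^ r₁ = q₂ ^^^ r₂ := by
    have := e1.trans e2.symm; exact congrArg Prod.fst this
  have hcc : p₁ ^^^ c₁ = p₂ ^^^ c₂ := by
    have := e1.trans e2.symm; exact congrArg Prod.snd this
  -- from B-pair equality
  have hfst : p₁ ^^^ q₁ = p₂ ^^^ q₂ := congrArg Prod.fst hBeq
  have hsnd : p₁ ^^^ B (q₁ ^^^ r₁) (p₁ ^^^ c₁) = p₂ ^^^ B (q₂ ^^^ r₂) (p₂ ^^^ c₂) :=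
    congrArg Prod.snd hBeq
  rw [hrr, hcc] at hsnd
  have hp : p₁ = p₂ := xor_cancel_right' hsnd
  subst hp
  have hq : q₁ = q₂ := xor_cancel_left' hfst
  subst hq
  have hr : r₁ = r₂ := xor_cancel_left' hrr
  have hc : c₁ = c₂ := xor_cancel_left' hcc
  exact hne (by rw [hr, hc])
end

section
/- Let m be a positive integer, let ⋆ be bitwise addition modulo 2 (XOR) on [2^m], let A be a 2^m × 2^m array in which each symbol of [2^{2m}] occurs in exactly one cell (write r*c for its entry in cell (r,c)), let B be a latin square of order 2^m on [2^m] with quasigroup operation ∘, and let 𝓐 = {((p,r),(q,c), (q⋆r)*(p⋆c)) : p,q,r,c ∈ [2^m]}. Let r1,r2,c1,c2 ∈ [2^m] satisfy r1 ≠ r2, c1 ≠ c2, r1∘c1 ≠ r2∘c2, and r1⋆r2 ≠ c1⋆c2. Set s = (r1∘c1)⋆(r2∘c2), R1=(0,r2), R2=(c1⋆c2, r1), R3=(c1⋆c2⋆s, r2⋆s), R4=(s, r1⋆s), K1=(0,c2), K2=(r1⋆r2, c1), K3=(r1⋆r2⋆s, c2⋆s), K4=(s, c1⋆s), and let I_A(r1,c1;r2,c2)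 = {(R1,K1,r2*c2), (R1,K2,r1*c1), (R2,K1,r1*c1), (R2,K2,r2*c2), (R3,K3,r1*c1), (R3,K4,r2*c2), (R4,K3,r2*c2), (R4,K4,r1*c1)}. Then: (i) I_A(r1,c1;r2,c2) ⊆ 𝓐; (ii) R1,R2,R3,R4 are pairwise distinct and K1,K2,K3,K4 are pairwise distinct (so I_A(r1,c1;r2,c2) is the union of the two intercalates {(R1,K1,r2*c2),(R1,K2,r1*c1),(R2,K1,r1*c1),(R2,K2,r2*c2)} and {(R3,K3,r1*c1),(R3,K4,r2*c2),(R4,K3,r2*c2),(R4,K4,r1*c1)}); and (iii) the eight cells lie in eight distinct 2^m × 2^m subsquares of 𝓐, i.e. the eight pairs (first coordinate of the row index, first coordinate of the column index) are pairwise distinct. -/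
/-- The configuration `I_A(r₁,c₁;r₂,c₂)` (the union of two intercalates of `𝓐`),
with `s = (r₁ ∘ c₁) ⋆ (r₂ ∘ c₂)`, rows `R₁ = (0,r₂)`, `R₂ = (c₁ ⋆ c₂, r₁)`,
`R₃ = (c₁ ⋆ c₂ ⋆ s, r₂ ⋆ s)`, `R₄ = (s, r₁ ⋆ s)` and columns `K₁ = (0,c₂)`,
`K₂ = (r₁ ⋆ r₂, c₁)`, `K₃ = (r₁ ⋆ r₂ ⋆ s, c₂ ⋆ s)`, `K₄ = (s, c₁ ⋆ s)`. -/
def IAset (A B : ℕ → ℕ → ℕ) (r₁ c₁ r₂ c₂ : ℕ) : Set ((ℕ × ℕ) × (ℕ × ℕ) × ℕ) :=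
  let s := B r₁ c₁ ^^^ B r₂ c₂
  {((0, r₂), (0, c₂), A r₂ c₂), ((0, r₂), (r₁ ^^^ r₂, c₁), A r₁ c₁),
   ((c₁ ^^^ c₂, r₁), (0, c₂), A r₁ c₁), ((c₁ ^^^ c₂, r₁), (r₁ ^^^ r₂, c₁), A r₂ c₂),
   ((c₁ ^^^ c₂ ^^^ s, r₂ ^^^ s), (r₁ ^^^ r₂ ^^^ s, c₂ ^^^ s), A r₁ c₁),
   ((c₁ ^^^ c₂ ^^^ s, r₂ ^^^ s), (s, c₁ ^^^ s), A r₂ c₂),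
   ((s, r₁ ^^^ s), (r₁ ^^^ r₂ ^^^ s, c₂ ^^^ s), A r₂ c₂),
   ((s, r₁ ^^^ s), (s, c₁ ^^^ s), A r₁ c₁)}

private lemma xor_left_comm' (a b c : ℕ) : a ^^^ (b ^^^ c) = b ^^^ (a ^^^ c) := by
  rw [← Nat.xor_assoc, Nat.xor_comm a b, Nat.xor_assoc]

private lemma eq_xor_self' {x t : ℕ} (h : x = x ^^^ t) : t = 0 := by
  have : x ^^^ 0 = x ^^^ t := by rw [Nat.xor_zero]; exact h
  exact (Nat.xor_right_inj.mp this).symm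

private lemma xor_eq_right' {x s : ℕ} (h : x ^^^ s = s) : x = 0 := by
  rw [← xor_cancel_right x s, h, Nat.xor_self]

private lemma rows_pairwise' (b s u v : ℕ) (hb : b ≠ 0) (hs : s ≠ 0) :
    ([((0 : ℕ), v), (b, u), (b ^^^ s, v ^^^ s), (s, u ^^^ s)] : List (ℕ × ℕ)).Pairwise
      (· ≠ ·) := by
  simp only [List.pairwise_cons, List.mem_cons, List.mem_singleton, List.not_mem_nil,
    forall_eq_or_imp, forall_eq, ne_eq, Prod.mk.injEq, not_and, List.Pairwise.nil, and_true,
    IsEmpty.forall_iff, implies_true]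
  exact ⟨⟨fun h => (hb h.symm).elim, fun _ h => hs (eq_xor_self' h),
    fun h => (hs h.symm).elim⟩,
    ⟨fun h => (hs (eq_xor_self' h)).elim, fun _ h => hs (eq_xor_self' h)⟩,
    fun h => (hb (xor_eq_right' h)).elim⟩

private lemma blocks_pairwise' (a b s : ℕ) (ha : a ≠ 0) (hb : b ≠ 0) (hs : s ≠ 0)
    (hab : a ≠ b) :
    ([((0 : ℕ), (0 : ℕ)), (0, a), (b, 0), (b, a), (b ^^^ s, a ^^^ s), (b ^^^ s, s),
      (s, a ^^^ s), (s, s)] : List (ℕ × ℕ)).Pairwise (· ≠ ·) := by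
  simp only [List.pairwise_cons, List.mem_cons, List.mem_singleton, List.not_mem_nil,
    forall_eq_or_imp, forall_eq, ne_eq, Prod.mk.injEq, not_and, List.Pairwise.nil, and_true,
    IsEmpty.forall_iff, implies_true]
  refine ⟨⟨fun _ h => ha h.symm, fun h => hb h.symm, fun _ h => ha h.symm,
      fun h1 h2 => hab ((xor_eq_zero_iff.mp h2.symm).trans
        (xor_eq_zero_iff.mp h1.symm).symm),
      fun _ h => hs h.symm, fun h => (hs h.symm).elim, fun h => (hs h.symm).elim⟩,
    ⟨fun _ => ha, fun h => hb h.symm,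
      fun _ h => hs (eq_xor_self' h),
      fun h1 h2 => hab (h2.trans (xor_eq_zero_iff.mp h1.symm).symm),
      fun h => (hs h.symm).elim, fun h => (hs h.symm).elim⟩,
    ⟨fun _ h => ha h.symm,
      fun h => (hs (eq_xor_self' h)).elim, fun h => (hs (eq_xor_self' h)).elim,
      fun h1 h2 => hab ((xor_eq_zero_iff.mp h2.symm).trans h1.symm),
      fun _ h => hs h.symm⟩,
    ⟨fun h => (hs (eq_xor_self' h)).elim, fun h => (hs (eq_xor_self' h)).elim,
      fun _ h => hs (eq_xor_self' h),
      fun h1 h2 => hab (h2.trans h1.symm)⟩,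
    ⟨fun _ h => ha (xor_eq_right' h), fun h => hb (xor_eq_right' h),
      fun h => (hb (xor_eq_right' h)).elim⟩,
    ⟨fun h => (hb (xor_eq_right' h)).elim, fun h => hb (xor_eq_right' h)⟩,
    fun _ h => ha (xor_eq_right' h)⟩

/-- Lemma 3.1: under Conditions C1–C4, `I_A(r₁,c₁;r₂,c₂) ⊆ 𝓐`;
its four rows `R₁,…,R₄` are pairwise distinct, its four columns `K₁,…,K₄` are pairwise
distinct (so it is the union of two intercalates); and its eight cells lie in eight
distinct `2^m × 2^m` subsquares of `𝓐` (the eight pairs of block coordinates are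
pairwise distinct). -/
theorem IA_two_intercalates (m : ℕ) (hm : 0 < m) (A B : ℕ → ℕ → ℕ)
    (hA : IsCellSymbolArray m A) (hB : IsLatinOp (2 ^ m) B)
    (r₁ r₂ c₁ c₂ : ℕ) (hr₁ : r₁ < 2 ^ m) (hr₂ : r₂ < 2 ^ m)
    (hc₁ : c₁ < 2 ^ m) (hc₂ : c₂ < 2 ^ m)
    (h₁ : r₁ ≠ r₂) (h₂ : c₁ ≠ c₂) (h₃ : B r₁ c₁ ≠ B r₂ c₂)
    (h₄ : r₁ ^^^ r₂ ≠ c₁ ^^^ c₂) :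
    IAset A B r₁ c₁ r₂ c₂ ⊆ calA m A ∧
    (let s := B r₁ c₁ ^^^ B r₂ c₂
     ([((0 : ℕ), r₂), (c₁ ^^^ c₂, r₁), (c₁ ^^^ c₂ ^^^ s, r₂ ^^^ s),
       (s, r₁ ^^^ s)] : List (ℕ × ℕ)).Pairwise (· ≠ ·) ∧
     ([((0 : ℕ), c₂), (r₁ ^^^ r₂, c₁), (r₁ ^^^ r₂ ^^^ s, c₂ ^^^ s),
       (s, c₁ ^^^ s)] : List (ℕ × ℕ)).Pairwise (· ≠ ·)) ∧
    (let s := B r₁ c₁ ^^^ B r₂ c₂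
     ([((0 : ℕ), (0 : ℕ)), (0, r₁ ^^^ r₂), (c₁ ^^^ c₂, 0), (c₁ ^^^ c₂, r₁ ^^^ r₂),
       (c₁ ^^^ c₂ ^^^ s, r₁ ^^^ r₂ ^^^ s), (c₁ ^^^ c₂ ^^^ s, s),
       (s, r₁ ^^^ r₂ ^^^ s), (s, s)] : List (ℕ × ℕ)).Pairwise (· ≠ ·)) := by
  obtain ⟨hBlt, -, -⟩ := hB
  have hs : B r₁ c₁ ^^^ B r₂ c₂ ≠ 0 := xor_eq_zero_iff.not.mpr h₃
  have hsm : B r₁ c₁ ^^^ B r₂ c₂ < 2 ^ m :=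
    Nat.xor_lt_two_pow (hBlt r₁ c₁ hr₁ hc₁) (hBlt r₂ c₂ hr₂ hc₂)
  have ha : r₁ ^^^ r₂ ≠ 0 := xor_eq_zero_iff.not.mpr h₁
  have hb : c₁ ^^^ c₂ ≠ 0 := xor_eq_zero_iff.not.mpr h₂
  have h0 : (0 : ℕ) < 2 ^ m := Nat.pow_pos (by norm_num)
  have hx : ∀ x y : ℕ, x < 2 ^ m → y < 2 ^ m → x ^^^ y < 2 ^ m :=
    fun _ _ => Nat.xor_lt_two_pow
  refine ⟨?_, ⟨rows_pairwise' _ _ _ _ hb hs, rows_pairwise' _ _ _ _ ha hs⟩,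
    blocks_pairwise' _ _ _ ha hb hs h₄⟩
  intro t ht
  simp only [IAset, Set.mem_insert_iff, Set.mem_singleton_iff] at ht
  rcases ht with rfl | rfl | rfl | rfl | rfl | rfl | rfl | rfl
  · exact ⟨0, 0, r₂, c₂, h0, h0, hr₂, hc₂, by
      simp [Nat.xor_assoc, Nat.xor_comm, xor_left_comm', xor_cancel_left]⟩
  · exact ⟨0, r₁ ^^^ r₂, r₂, c₁, h0, hx _ _ hr₁ hr₂, hr₂, hc₁, by
      simp [Nat.xor_assoc, Nat.xor_comm, xor_left_comm', xor_cancel_left]⟩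
  · exact ⟨c₁ ^^^ c₂, 0, r₁, c₂, hx _ _ hc₁ hc₂, h0, hr₁, hc₂, by
      simp [Nat.xor_assoc, Nat.xor_comm, xor_left_comm', xor_cancel_left]⟩
  · exact ⟨c₁ ^^^ c₂, r₁ ^^^ r₂, r₁, c₁, hx _ _ hc₁ hc₂, hx _ _ hr₁ hr₂, hr₁, hc₁, by
      simp [Nat.xor_assoc, Nat.xor_comm, xor_left_comm', xor_cancel_left]⟩
  · exact ⟨c₁ ^^^ c₂ ^^^ (B r₁ c₁ ^^^ B r₂ c₂), r₁ ^^^ r₂ ^^^ (B r₁ c₁ ^^^ B r₂ c₂),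
      r₂ ^^^ (B r₁ c₁ ^^^ B r₂ c₂), c₂ ^^^ (B r₁ c₁ ^^^ B r₂ c₂),
      hx _ _ (hx _ _ hc₁ hc₂) hsm, hx _ _ (hx _ _ hr₁ hr₂) hsm,
      hx _ _ hr₂ hsm, hx _ _ hc₂ hsm, by
      simp [Nat.xor_assoc, Nat.xor_comm, xor_left_comm', xor_cancel_left]⟩
  · exact ⟨c₁ ^^^ c₂ ^^^ (B r₁ c₁ ^^^ B r₂ c₂), B r₁ c₁ ^^^ B r₂ c₂,
      r₂ ^^^ (B r₁ c₁ ^^^ B r₂ c₂), c₁ ^^^ (B r₁ c₁ ^^^ B r₂ c₂),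
      hx _ _ (hx _ _ hc₁ hc₂) hsm, hsm, hx _ _ hr₂ hsm, hx _ _ hc₁ hsm, by
      simp [Nat.xor_assoc, Nat.xor_comm, xor_left_comm', xor_cancel_left]⟩
  · exact ⟨B r₁ c₁ ^^^ B r₂ c₂, r₁ ^^^ r₂ ^^^ (B r₁ c₁ ^^^ B r₂ c₂),
      r₁ ^^^ (B r₁ c₁ ^^^ B r₂ c₂), c₂ ^^^ (B r₁ c₁ ^^^ B r₂ c₂),
      hsm, hx _ _ (hx _ _ hr₁ hr₂) hsm, hx _ _ hr₁ hsm, hx _ _ hc₂ hsm, by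
      simp [Nat.xor_assoc, Nat.xor_comm, xor_left_comm', xor_cancel_left]⟩
  · exact ⟨B r₁ c₁ ^^^ B r₂ c₂, B r₁ c₁ ^^^ B r₂ c₂,
      r₁ ^^^ (B r₁ c₁ ^^^ B r₂ c₂), c₁ ^^^ (B r₁ c₁ ^^^ B r₂ c₂),
      hsm, hsm, hx _ _ hr₁ hsm, hx _ _ hc₁ hsm, by
      simp [Nat.xor_assoc, Nat.xor_comm, xor_left_comm', xor_cancel_left]⟩
end
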